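/- Let n be a positive integer, let H be an n×n Hermitian complex matrix, and let R be an n×n complex matrix. If ⟨ψ, Rψ⟩ = 0 for every eigenvector ψ of H, then Tr(Hᵏ · R) = 0 for every natural number k ≥ 0 (in particular Tr(R) = 0). -/

import Mathlib

open Matrix

/-- If `⟨ψ, Rψ⟩ = 0` for every eigenvector `ψ` of the Hermitian matrix `H`,
then `Tr(Hᵏ R) = 0` for every `k ≥ 0` (in particular `Tr R = 0`). -/
theorem orthogonality_implies_trace_vanish (n : ℕ) (hn : 0 < n)
    (H : Matrix (Fin n) (Fin n) ℂ) (hH : H.IsHermitian)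
    (R : Matrix (Fin n) (Fin n) ℂ)
    (horth : ∀ ψ : Fin n → ℂ, ψ ≠ 0 → (∃ μ : ℂ, H.mulVec ψ = μ • ψ) →
      star ψ ⬝ᵥ R.mulVec ψ = 0) :
    (∀ k : ℕ, (H ^ k * R).trace = 0) ∧ R.trace = 0 := by
  set U : Matrix (Fin n) (Fin n) ℂ := (hH.eigenvectorUnitary : Matrix (Fin n) (Fin n) ℂ) with hUdef
  set D : Matrix (Fin n) (Fin n) ℂ := diagonal (RCLike.ofReal ∘ hH.eigenvalues) with hDdef
  have hU : U ∈ Matrix.unitaryGroup (Fin n) ℂ := hH.eigenvectorUnitary.2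
  have hUsU : star U * U = 1 := (Matrix.mem_unitaryGroup_iff'.mp hU)
  have hUUs : U * star U = 1 := (Matrix.mem_unitaryGroup_iff.mp hU)
  have hspec : H = U * D * star U := hH.spectral_theorem
  -- diagonal entries of U* R U vanish
  have hdiag : ∀ i, (star U * R * U) i i = 0 := by
    intro i
    have hv : H.mulVec (⇑(hH.eigenvectorBasis i)) =
        ((hH.eigenvalues i : ℂ)) • (⇑(hH.eigenvectorBasis i)) := by
      have := hH.mulVec_eigenvectorBasis i
      convert this using 2
      exact (RCLike.real_smul_eq_coe_smul (K := ℂ) _ _).symm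
    have hne : (⇑(hH.eigenvectorBasis i) : Fin n → ℂ) ≠ 0 :=
      (WithLp.ofLp_eq_zero 2).ne.2 <| hH.eigenvectorBasis.orthonormal.ne_zero i
    have h0 := horth _ hne ⟨_, hv⟩
    have hcol : ∀ j, U j i = hH.eigenvectorBasis i j := fun j =>
      hH.eigenvectorUnitary_apply j i
    calc (star U * R * U) i i
        = star (⇑(hH.eigenvectorBasis i)) ⬝ᵥ R.mulVec (⇑(hH.eigenvectorBasis i)) := by
          simp only [Matrix.mul_apply, Matrix.star_apply, dotProduct, Matrix.mulVec,
            dotProduct, Pi.star_apply, hcol, Finset.sum_mul, Finset.mul_sum]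
          rw [Finset.sum_comm]
          exact Finset.sum_congr rfl fun j _ => Finset.sum_congr rfl fun l _ => by ring
      _ = 0 := h0
  have key : ∀ k : ℕ, (H ^ k * R).trace = 0 := by
    intro k
    have hHk : H ^ k = U * D ^ k * star U := by
      induction k with
      | zero => simpa using hUUs.symm
      | succ m ih =>
        rw [pow_succ, pow_succ, ih, hspec]
        calc (U * D ^ m * star U) * (U * D * star U)
            = U * D ^ m * (star U * U) * D * star U := by simp only [Matrix.mul_assoc]
          _ = U * (D ^ m * D) * star U := by
              rw [hUsU]; simp only [Matrix.mul_assoc, Matrix.mul_one]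
    have htr : (H ^ k * R).trace = (D ^ k * (star U * R * U)).trace := by
      rw [hHk, show U * D ^ k * star U * R = U * (D ^ k * (star U * R)) by
        simp only [Matrix.mul_assoc]]
      rw [Matrix.trace_mul_comm]
      simp only [Matrix.mul_assoc]
    rw [htr, Matrix.trace]
    refine Finset.sum_eq_zero fun i _ => ?_
    simp [Matrix.diag, hDdef, Matrix.diagonal_pow, Matrix.diagonal_mul, hdiag i]
  exact ⟨key, by simpa using key 0⟩
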